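/- If a signed graph (H,π) is obtained from a signed graph (G,σ) by a (possibly empty) finite sequence of elementary homomorphisms, each identifying two identifiable vertices, then ψ(H,π) ≤ ψ(G,σ). -/

import Mathlib

open SimpleGraph

/-- A signature on a graph: a symmetric assignment of signs (`1` or `-1`) to pairs of
vertices (only the values on edges are relevant). -/
def IsSignature {V : Type*} (σ : V → V → ℤ) : Prop :=
  (∀ u v, σ u v = σ v u) ∧ (∀ u v, σ u v = 1 ∨ σ u v = -1)

/-- `σ'` is obtained from `σ` by switching a set of vertices: every vertex gets a
switching value `±1`, and the sign of an edge is multiplied by the values at its ends. -/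
def SwitchEquiv {V : Type*} (σ σ' : V → V → ℤ) : Prop :=
  ∃ s : V → ℤ, (∀ v, s v = 1 ∨ s v = -1) ∧ ∀ u v, σ' u v = s u * s v * σ u v

/-- The colour set `M_k`, as a set of integers: `{±1, …, ±n}` if `k = 2n`, and
`{-n, …, -1, 0, 1, …, n}` if `k = 2n+1` (colour `±0` is represented by `0`). -/
def colourSet (k : ℕ) : Set ℤ :=
  if Even k then {i | i ≠ 0 ∧ i.natAbs ≤ k / 2} else {i | i.natAbs ≤ k / 2}

/-- A proper `k`-colouring of the signed graph `(G, σ)`: colours come from `M_k` and,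
for each edge `uv`, `φ u ≠ σ(uv) · φ v`. -/
def IsProperColouring {V : Type*} (G : SimpleGraph V) (σ : V → V → ℤ) (k : ℕ)
    (φ : V → ℤ) : Prop :=
  (∀ v, φ v ∈ colourSet k) ∧ ∀ u v, G.Adj u v → φ u ≠ σ u v * φ v

/-- The sign of an integer for the purpose of switching: `-1` for negative colours,
`1` otherwise. -/
def isgn (x : ℤ) : ℤ := if x < 0 then -1 else 1

/-- The sign of the edge `uv` after switching every vertex whose colour is negative. -/
def redSign {V : Type*} (σ : V → V → ℤ) (φ : V → ℤ) (u v : V) : ℤ :=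
  isgn (φ u) * isgn (φ v) * σ u v

/-- After switching all negatively-coloured vertices and taking absolute values of
colours, there is an edge of `(G, σ)` whose ends get values `i` and `j` and whose
resulting sign is `s`. -/
def HasEdgeType {V : Type*} (G : SimpleGraph V) (σ : V → V → ℤ) (φ : V → ℤ)
    (i j : ℕ) (s : ℤ) : Prop :=
  ∃ u v, G.Adj u v ∧ (φ u).natAbs = i ∧ (φ v).natAbs = j ∧ redSign σ φ u v = s

/-- A complete `k`-colouring of the signed graph `(G, σ)`. -/
def IsCompleteColouring {V : Type*} (G : SimpleGraph V) (σ : V → V → ℤ) (k : ℕ)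
    (φ : V → ℤ) : Prop :=
  IsProperColouring G σ k φ ∧
  (∀ i j : ℕ, (i : ℤ) ∈ colourSet k → (j : ℤ) ∈ colourSet k → i ≠ j →
    HasEdgeType G σ φ i j 1 ∧ HasEdgeType G σ φ i j (-1)) ∧
  (∀ i : ℕ, 1 ≤ i → (i : ℤ) ∈ colourSet k → HasEdgeType G σ φ i i (-1))

/-- Some signed graph equivalent to `(G, σ)` admits a complete `k`-colouring. -/
def AdmitsComplete {V : Type*} (G : SimpleGraph V) (σ : V → V → ℤ) (k : ℕ) : Prop :=
  ∃ σ', IsSignature σ' ∧ SwitchEquiv σ σ' ∧ ∃ φ, IsCompleteColouring G σ' k φ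

/-- The achromatic number of the signed graph `(G, σ)`: the largest `k` such that some
signed graph equivalent to `(G, σ)` admits a complete `k`-colouring. -/
noncomputable def psi {V : Type*} (G : SimpleGraph V) (σ : V → V → ℤ) : ℕ :=
  sSup {k | AdmitsComplete G σ k}

/-- The chromatic number of the signed graph `(G, σ)`: the smallest `k` such that
`(G, σ)` admits a proper `k`-colouring. -/
noncomputable def chi {V : Type*} (G : SimpleGraph V) (σ : V → V → ℤ) : ℕ :=
  sInf {k | ∃ φ, IsProperColouring G σ k φ}

/-- `(H, π)` is an elementary homomorphic image of `(G, σ)`: it is obtained by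
identifying two identifiable non-adjacent vertices `u` and `v` (after possibly
switching `u` or `v` so that common neighbours see the same signs). -/
def IsElementaryImage {V : Type*} {W : Type*} (G : SimpleGraph V) (σ : V → V → ℤ)
    (H : SimpleGraph W) (π : W → W → ℤ) : Prop :=
  ∃ (u v : V) (f : V → W) (σ'' : V → V → ℤ),
    u ≠ v ∧ ¬G.Adj u v ∧ IsSignature σ'' ∧
    (∃ s : V → ℤ, (∀ x, s x = 1 ∨ s x = -1) ∧ (∀ x, x ≠ u → x ≠ v → s x = 1) ∧
      ∀ x y, σ'' x y = s x * s y * σ x y) ∧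
    (∀ w, G.Adj u w → G.Adj v w → σ'' u w = σ'' v w) ∧
    Function.Surjective f ∧
    (∀ x y, f x = f y ↔ (x = y ∨ (x = u ∧ y = v) ∨ (x = v ∧ y = u))) ∧
    (∀ x y, G.Adj x y → H.Adj (f x) (f y) ∧ π (f x) (f y) = σ'' x y) ∧
    (∀ a b, H.Adj a b → ∃ x y, G.Adj x y ∧ f x = a ∧ f y = b)

/-- A bundled signed graph. -/
structure BundledSignedGraph : Type 1 where
  carrier : Type
  graph : SimpleGraph carrier
  sign : carrier → carrier → ℤ

/-- One elementary homomorphism step between bundled signed graphs. -/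
def ElemStep (A B : BundledSignedGraph) : Prop :=
  IsSignature A.sign ∧ IsSignature B.sign ∧
    IsElementaryImage A.graph A.sign B.graph B.sign

lemma sign_mul_pm {a b : ℤ} (ha : a = 1 ∨ a = -1) (hb : b = 1 ∨ b = -1) :
    a * b = 1 ∨ a * b = -1 := by
  rcases ha with h | h <;> rcases hb with h' | h' <;> simp [h, h']

lemma coe_mem_colourSet {i k : ℕ} (h1 : 1 ≤ i) (h2 : i ≤ k / 2) :
    (i : ℤ) ∈ colourSet k := by
  unfold colourSet
  split
  · exact ⟨by exact_mod_cast Nat.one_le_iff_ne_zero.mp h1, by simpa using h2⟩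
  · simpa using h2

lemma psi_bddAbove {V : Type*} [Finite V] (G : SimpleGraph V) (σ : V → V → ℤ) :
    BddAbove {k | AdmitsComplete G σ k} := by
  haveI := Fintype.ofFinite V
  haveI : DecidableEq V := Classical.decEq V
  refine ⟨2 * Fintype.card V + 1, fun k hk => ?_⟩
  obtain ⟨σ', -, -, φ, ⟨-, -, hdiag⟩⟩ := hk
  rcases isEmpty_or_nonempty V with hV | hV
  · by_contra hlt
    push_neg at hlt
    have hc0 : Fintype.card V = 0 := Fintype.card_eq_zero
    have h12 : 1 ≤ k / 2 := by omega
    obtain ⟨p, -, -⟩ := hdiag 1 le_rfl (coe_mem_colourSet le_rfl h12)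
    exact (IsEmpty.false p)
  · have key : ∀ i : ℕ, ∃ pq : V × V, 1 ≤ i → i ≤ k / 2 →
        G.Adj pq.1 pq.2 ∧ (φ pq.1).natAbs = i ∧ (φ pq.2).natAbs = i := by
      intro i
      by_cases h1 : 1 ≤ i ∧ i ≤ k / 2
      · obtain ⟨p, q, hadj, hp, hq, -⟩ := hdiag i h1.1 (coe_mem_colourSet h1.1 h1.2)
        exact ⟨(p, q), fun _ _ => ⟨hadj, hp, hq⟩⟩
      · exact ⟨(Classical.arbitrary V, Classical.arbitrary V),
          fun ha hb => absurd ⟨ha, hb⟩ h1⟩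
    choose g hg using key
    have hcard : ((Finset.Icc 1 (k/2)).biUnion
        (fun i => ({(g i).1, (g i).2} : Finset V))).card
        = ∑ i ∈ Finset.Icc 1 (k/2), ({(g i).1, (g i).2} : Finset V).card := by
      apply Finset.card_biUnion
      intro x hx y hy hxy
      simp only [Finset.mem_coe, Finset.mem_Icc] at hx hy
      obtain ⟨-, hpx, hqx⟩ := hg x hx.1 hx.2
      obtain ⟨-, hpy, hqy⟩ := hg y hy.1 hy.2
      change Disjoint _ _
      rw [Finset.disjoint_left]
      intro a ha ha'
      simp only [Finset.mem_insert, Finset.mem_singleton] at ha ha'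
      have hax : (φ a).natAbs = x := by rcases ha with h | h <;> (rw [h]; assumption)
      have hay : (φ a).natAbs = y := by rcases ha' with h | h <;> (rw [h]; assumption)
      exact hxy (hax.symm.trans hay)
    have h2 : ∀ i ∈ Finset.Icc 1 (k/2), ({(g i).1, (g i).2} : Finset V).card = 2 := by
      intro i hi
      simp only [Finset.mem_Icc] at hi
      exact Finset.card_pair (hg i hi.1 hi.2).1.ne
    have hsum : ∑ i ∈ Finset.Icc 1 (k/2), ({(g i).1, (g i).2} : Finset V).card
        = (k / 2) * 2 := by
      rw [Finset.sum_congr rfl h2, Finset.sum_const, Nat.card_Icc, smul_eq_mul]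
      omega
    have hT : ((Finset.Icc 1 (k/2)).biUnion
        (fun i => ({(g i).1, (g i).2} : Finset V))).card ≤ Fintype.card V :=
      Finset.card_le_univ _
    rw [hcard, hsum] at hT
    omega

lemma admits_mono {V W : Type*} {G : SimpleGraph V} {σ : V → V → ℤ}
    {H : SimpleGraph W} {π : W → W → ℤ} (him : IsElementaryImage G σ H π)
    {k : ℕ} (hk : AdmitsComplete H π k) : AdmitsComplete G σ k := by
  obtain ⟨u, v, f, σ'', huv, hnadj, hsig'', ⟨s, hs1, hs2, hs3⟩, hcommon, hsurj, hfib,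
    hedge, hlift⟩ := him
  obtain ⟨π', hsigπ', ⟨t, ht1, ht2⟩, φ, ⟨hcol, hproper⟩, hpairs, hdiag⟩ := hk
  have hπσ : ∀ x y, G.Adj x y → π' (f x) (f y) = t (f x) * t (f y) * σ'' x y :=
    fun x y hxy => by rw [ht2 (f x) (f y), (hedge x y hxy).2]
  have htrans : ∀ i j c, HasEdgeType H π' φ i j c →
      HasEdgeType G (fun x y => t (f x) * t (f y) * σ'' x y) (φ ∘ f) i j c := by
    rintro i j c ⟨a, b, hab, ha, hb, hred⟩
    obtain ⟨x, y, hxy, hfx, hfy⟩ := hlift a b hab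
    refine ⟨x, y, hxy, ?_, ?_, ?_⟩
    · show (φ (f x)).natAbs = i; rw [hfx]; exact ha
    · show (φ (f y)).natAbs = j; rw [hfy]; exact hb
    · show isgn (φ (f x)) * isgn (φ (f y)) * (t (f x) * t (f y) * σ'' x y) = c
      rw [← hπσ x y hxy, hfx, hfy]
      exact hred
  refine ⟨fun x y => t (f x) * t (f y) * σ'' x y,
    ⟨fun x y => by
      show t (f x) * t (f y) * σ'' x y = t (f y) * t (f x) * σ'' y x
      rw [hsig''.1 x y]; ring,
     fun x y => sign_mul_pm (sign_mul_pm (ht1 _) (ht1 _)) (hsig''.2 x y)⟩,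
    ⟨fun x => t (f x) * s x, fun x => sign_mul_pm (ht1 _) (hs1 _),
     fun x y => by
      show t (f x) * t (f y) * σ'' x y = (t (f x) * s x) * (t (f y) * s y) * σ x y
      rw [hs3 x y]; ring⟩,
    φ ∘ f,
    ⟨fun x => hcol (f x), fun x y hxy => by
      have := hproper (f x) (f y) (hedge x y hxy).1
      rw [hπσ x y hxy] at this
      exact this⟩,
    fun i j hi hj hij => ⟨htrans _ _ _ (hpairs i j hi hj hij).1,
      htrans _ _ _ (hpairs i j hi hj hij).2⟩,
    fun i h1 hi => htrans _ _ _ (hdiag i h1 hi)⟩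

lemma psi_step {V W : Type*} [Finite V] {G : SimpleGraph V} {σ : V → V → ℤ}
    {H : SimpleGraph W} {π : W → W → ℤ} (him : IsElementaryImage G σ H π) :
    psi H π ≤ psi G σ := by
  rcases Set.eq_empty_or_nonempty {k | AdmitsComplete H π k} with he | hne
  · unfold psi
    rw [he, csSup_empty]
    exact bot_le
  · exact csSup_le_csSup (psi_bddAbove G σ) hne (fun k hk => admits_mono him hk)

/-- If `(H,π)` is obtained from `(G,σ)` by a (possibly empty) finite
sequence of elementary homomorphisms, then `ψ(H,π) ≤ ψ(G,σ)`. -/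
theorem statement14 (A B : BundledSignedGraph) [Finite A.carrier]
    (hA : IsSignature A.sign) (hB : IsSignature B.sign)
    (h : Relation.ReflTransGen ElemStep A B) :
    psi B.graph B.sign ≤ psi A.graph A.sign := by
  have main : ∀ B, Relation.ReflTransGen ElemStep A B →
      Finite B.carrier ∧ psi B.graph B.sign ≤ psi A.graph A.sign := by
    intro B hAB
    induction hAB with
    | refl => exact ⟨inferInstance, le_refl _⟩
    | @tail C D hAC hCD ih =>
        obtain ⟨hfin, hle⟩ := ih
        haveI := hfin
        obtain ⟨-, -, him⟩ := hCD
        have hsurj : ∃ f : C.carrier → D.carrier, Function.Surjective f := by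
          obtain ⟨u, v, f, σ'', -, -, -, -, -, hsurj, -⟩ := him
          exact ⟨f, hsurj⟩
        obtain ⟨f, hf⟩ := hsurj
        exact ⟨Finite.of_surjective f hf, le_trans (psi_step him) hle⟩
  exact (main B h).2
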